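/- Let γ ∈ [0,1), let (φ_t)_{t≥0} and (ψ_t)_{t≥0} be sequences in ℝ^d with ‖ψ_t‖ ≤ M for all t, satisfying ‖φ_t + γψ_{t+1} − ψ_t‖ ≤ ε for all t. If the Cesàro averages (1/T) Σ_{t=0}^{T−1} φ_t converge to a limit L ∈ ℝ^d, then ‖L − z‖ ≤ sup_t ‖(1−γ)ψ_t − z‖ + ε for every z ∈ ℝ^d. -/

import Mathlib

theorem stmt_11 (d : ℕ) (γ ε M : ℝ) (hγ0 : 0 ≤ γ) (hγ1 : γ < 1) (hε : 0 ≤ ε)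
    (φ ψ : ℕ → EuclideanSpace ℝ (Fin d))
    (hM : ∀ t, ‖ψ t‖ ≤ M)
    (hbell : ∀ t, ‖φ t + γ • ψ (t + 1) - ψ t‖ ≤ ε)
    (L : EuclideanSpace ℝ (Fin d))
    (hL : Filter.Tendsto (fun T : ℕ => (T : ℝ)⁻¹ • (∑ t ∈ Finset.range T, φ t))
      Filter.atTop (nhds L)) :
    ∀ z : EuclideanSpace ℝ (Fin d),
      ‖L - z‖ ≤ (⨆ t : ℕ, ‖(1 - γ) • ψ t - z‖) + ε := by
  intro z
  have hM0 : 0 ≤ M := le_trans (norm_nonneg _) (hM 0)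
  set S : ℝ := ⨆ t : ℕ, ‖(1 - γ) • ψ t - z‖ with hS
  have hbdd : BddAbove (Set.range fun t : ℕ => ‖(1 - γ) • ψ t - z‖) := by
    refine ⟨(1 - γ) * M + ‖z‖, ?_⟩
    rintro x ⟨t, rfl⟩
    calc ‖(1 - γ) • ψ t - z‖ ≤ ‖(1 - γ) • ψ t‖ + ‖z‖ := norm_sub_le _ _
      _ ≤ (1 - γ) * M + ‖z‖ := by
          have : ‖(1 - γ) • ψ t‖ = |1 - γ| * ‖ψ t‖ := norm_smul _ _
          rw [this, abs_of_nonneg (by linarith)]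
          have := hM t
          nlinarith [norm_nonneg (ψ t)]
  have hSle : ∀ t, ‖(1 - γ) • ψ t - z‖ ≤ S := fun t => le_ciSup hbdd t
  -- decomposition identity
  have hdecomp : ∀ T : ℕ,
      (∑ t ∈ Finset.range T, φ t) - (T : ℝ) • z =
        (∑ t ∈ Finset.range T, ((1 - γ) • ψ t - z)) + γ • (ψ 0 - ψ T)
          + ∑ t ∈ Finset.range T, (φ t + γ • ψ (t + 1) - ψ t) := by
    intro T
    induction T with
    | zero => simp
    | succ n ih =>
      rw [Finset.sum_range_succ, Finset.sum_range_succ, Finset.sum_range_succ]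
      push_cast
      have := ih
      rw [show ((n : ℝ) + 1) • z = (n : ℝ) • z + z by module]
      -- rearrange using ih
      have goal : (∑ t ∈ Finset.range n, φ t) + φ n - ((n : ℝ) • z + z) =
          ((∑ t ∈ Finset.range n, φ t) - (n : ℝ) • z) + (φ n - z) := by module
      rw [goal, ih]
      module
  -- norm bound for each T
  have hbound : ∀ T : ℕ,
      ‖(∑ t ∈ Finset.range T, φ t) - (T : ℝ) • z‖ ≤ (T : ℝ) * (S + ε) + 2 * M * γ := by
    intro T
    rw [hdecomp T]
    calc ‖(∑ t ∈ Finset.range T, ((1 - γ) • ψ t - z)) + γ • (ψ 0 - ψ T)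
          + ∑ t ∈ Finset.range T, (φ t + γ • ψ (t + 1) - ψ t)‖
        ≤ ‖∑ t ∈ Finset.range T, ((1 - γ) • ψ t - z)‖ + ‖γ • (ψ 0 - ψ T)‖
            + ‖∑ t ∈ Finset.range T, (φ t + γ • ψ (t + 1) - ψ t)‖ :=
          le_trans (norm_add_le _ _) (by gcongr; exact norm_add_le _ _)
      _ ≤ (T : ℝ) * S + 2 * M * γ + (T : ℝ) * ε := by
          gcongr
          · calc ‖∑ t ∈ Finset.range T, ((1 - γ) • ψ t - z)‖
                ≤ ∑ t ∈ Finset.range T, ‖(1 - γ) • ψ t - z‖ := norm_sum_le _ _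
              _ ≤ ∑ t ∈ Finset.range T, S := Finset.sum_le_sum fun t _ => hSle t
              _ = (T : ℝ) * S := by simp [mul_comm]
          · rw [norm_smul, Real.norm_eq_abs, abs_of_nonneg hγ0]
            calc γ * ‖ψ 0 - ψ T‖ ≤ γ * (‖ψ 0‖ + ‖ψ T‖) := by
                  gcongr; exact norm_sub_le _ _
              _ ≤ γ * (M + M) := by gcongr <;> [exact hM 0; exact hM T]
              _ = 2 * M * γ := by ring
          · calc ‖∑ t ∈ Finset.range T, (φ t + γ • ψ (t + 1) - ψ t)‖
                ≤ ∑ t ∈ Finset.range T, ‖φ t + γ • ψ (t + 1) - ψ t‖ := norm_sum_le _ _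
              _ ≤ ∑ t ∈ Finset.range T, ε := Finset.sum_le_sum fun t _ => hbell t
              _ = (T : ℝ) * ε := by simp [mul_comm]
      _ = (T : ℝ) * (S + ε) + 2 * M * γ := by ring
  -- averaged bound for T ≥ 1
  have havg : ∀ T : ℕ, 1 ≤ T →
      ‖(T : ℝ)⁻¹ • (∑ t ∈ Finset.range T, φ t) - z‖ ≤ S + ε + (T : ℝ)⁻¹ * (2 * M * γ) := by
    intro T hT
    have hTpos : (0 : ℝ) < T := by exact_mod_cast hT
    have hrw : (T : ℝ)⁻¹ • (∑ t ∈ Finset.range T, φ t) - z =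
        (T : ℝ)⁻¹ • ((∑ t ∈ Finset.range T, φ t) - (T : ℝ) • z) := by
      rw [smul_sub, smul_smul, inv_mul_cancel₀ hTpos.ne', one_smul]
    rw [hrw, norm_smul, Real.norm_eq_abs, abs_of_pos (inv_pos.mpr hTpos)]
    calc (T : ℝ)⁻¹ * ‖(∑ t ∈ Finset.range T, φ t) - (T : ℝ) • z‖
        ≤ (T : ℝ)⁻¹ * ((T : ℝ) * (S + ε) + 2 * M * γ) := by
          gcongr
          exact hbound T
      _ = S + ε + (T : ℝ)⁻¹ * (2 * M * γ) := by
          field_simp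
  -- take limits
  have h1 : Filter.Tendsto (fun T : ℕ => ‖(T : ℝ)⁻¹ • (∑ t ∈ Finset.range T, φ t) - z‖)
      Filter.atTop (nhds ‖L - z‖) := (hL.sub tendsto_const_nhds).norm
  have h2 : Filter.Tendsto (fun T : ℕ => S + ε + (T : ℝ)⁻¹ * (2 * M * γ))
      Filter.atTop (nhds (S + ε + 0 * (2 * M * γ))) := by
    exact tendsto_const_nhds.add (tendsto_inv_atTop_nhds_zero_nat.mul tendsto_const_nhds)
  rw [zero_mul, add_zero] at h2
  exact le_of_tendsto_of_tendsto h1 h2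
    (Filter.eventually_atTop.mpr ⟨1, fun T hT => havg T hT⟩)
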